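/- Let L be a Leibniz algebra over F, (l,r,V) a representation of L, A a subspace of L, and x an element of the normalizer n_L(A). For an integer k ≥ 0 set E_k = r_A r_x^k + r_A r_x^{k-1} + ⋯ + r_A r_x + r_A. Then for every integer p ≥ 1 one has E_k^p ⊆ (r_A)^p r_x^{pk} + (r_A)^p r_x^{pk-1} + ⋯ + (r_A)^p r_x + (r_A)^p, i.e. E_k^p is contained in the sum over 0 ≤ j ≤ pk of the subspaces (r_A)^p r_x^j. -/
import Mathlib


/-- Let `(l,r,V)` be a representation of a Leibniz algebra `L`,
`A` a subspace of `L`, `x ∈ n_L(A)`, and for `k ≥ 0` set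
`E_k = r_A r_x^k + r_A r_x^{k-1} + ⋯ + r_A r_x + r_A`.  Then for every `p ≥ 1`,
`E_k^p ⊆ Σ_{0 ≤ j ≤ pk} (r_A)^p r_x^j`, where `r_A = A.map r`. -/
theorem Ek_pow_subset
    (F L V : Type*) [Field F]
    [AddCommGroup L] [Module F L]
    [AddCommGroup V] [Module F V]
    (b : L →ₗ[F] L →ₗ[F] L)
    (hb : ∀ x y z : L, b x (b y z) = b (b x y) z - b (b x z) y)
    (l r : L →ₗ[F] Module.End F V)
    (hr : ∀ x y : L, r (b x y) = r y * r x - r x * r y)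
    (hlr : ∀ x y : L, l (b x y) = r y * l x - l x * r y)
    (hll : ∀ x y : L, l (b x y) = r y * l x + l x * l y)
    (A : Submodule F L) (x : L)
    (hx : ∀ a ∈ A, b x a ∈ A ∧ b a x ∈ A)
    (k : ℕ) :
    ∀ p : ℕ, 1 ≤ p →
      (⨆ j ∈ Finset.range (k + 1), A.map r * Submodule.span F {(r x) ^ j}) ^ p ≤
        ⨆ j ∈ Finset.range (p * k + 1),
          (A.map r) ^ p * Submodule.span F {(r x) ^ j} := by
  set rA : Submodule F (Module.End F V) := A.map r with hrA
  -- single swap: r_x r_A ⊆ r_A r_x + r_A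
  have hsw1 : Submodule.span F {r x} * rA ≤ rA * Submodule.span F {r x} ⊔ rA := by
    rw [Submodule.mul_le]
    intro s hs t ht
    obtain ⟨a, ha, rfl⟩ := Submodule.mem_map.mp ht
    obtain ⟨c, rfl⟩ := Submodule.mem_span_singleton.mp hs
    have hxa : (r x) * (r a) = r a * r x + r (b a x) := by
      rw [hr a x]; abel
    have : (c • r x) * r a = c • (r a * r x) + c • r (b a x) := by
      rw [smul_mul_assoc, hxa, smul_add]
    rw [this]
    refine add_mem (Submodule.smul_mem _ c (Submodule.mem_sup_left ?_))
      (Submodule.smul_mem _ c (Submodule.mem_sup_right ?_))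
    · exact Submodule.mul_mem_mul (Submodule.mem_map_of_mem ha)
        (Submodule.mem_span_singleton_self _)
    · exact Submodule.mem_map_of_mem (hx a ha).2
  -- iterated swap
  have hswap : ∀ i : ℕ, Submodule.span F {(r x) ^ i} * rA ≤
      ⨆ m ∈ Finset.range (i + 1), rA * Submodule.span F {(r x) ^ m} := by
    intro i
    induction i with
    | zero =>
      rw [pow_zero, ← Submodule.one_eq_span, Submodule.one_mul]
      refine le_trans ?_ (le_iSup₂ (f := fun m (_ : m ∈ Finset.range (0 + 1)) =>
        rA * Submodule.span F {(r x) ^ m}) 0 (by simp))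
      rw [pow_zero, ← Submodule.one_eq_span, Submodule.mul_one]
    | succ i ih =>
      have h1 : Submodule.span F {(r x) ^ (i + 1)} =
          Submodule.span F {r x} * Submodule.span F {(r x) ^ i} := by
        rw [Submodule.span_mul_span, Set.singleton_mul_singleton, ← pow_succ']
      rw [h1, mul_assoc]
      refine le_trans (mul_le_mul' le_rfl ih) ?_
      simp only [Submodule.mul_iSup]
      refine iSup₂_le fun m hm => ?_
      rw [← mul_assoc]
      refine le_trans (mul_le_mul' hsw1 le_rfl) ?_
      rw [Submodule.sup_mul, mul_assoc, Submodule.span_mul_span, Set.singleton_mul_singleton,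
        ← pow_succ']
      refine sup_le ?_ ?_
      · exact le_iSup₂ (f := fun n (_ : n ∈ Finset.range (i + 1 + 1)) =>
          rA * Submodule.span F {(r x) ^ n}) (m + 1)
          (by simp at hm ⊢; omega)
      · exact le_iSup₂ (f := fun n (_ : n ∈ Finset.range (i + 1 + 1)) =>
          rA * Submodule.span F {(r x) ^ n}) m
          (by simp at hm ⊢; omega)
  intro p hp
  induction p, hp using Nat.le_induction with
  | base =>
    simp only [Submodule.pow_one, one_mul]
    exact le_rfl
  | succ p hp ih =>
    rw [Submodule.pow_succ]
    refine le_trans (mul_le_mul' ih le_rfl) ?_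
    simp only [Submodule.iSup_mul, Submodule.mul_iSup]
    refine iSup₂_le fun j hj => iSup₂_le fun i hi => ?_
    have e1 : rA ^ p * Submodule.span F {(r x) ^ i} *
        (rA * Submodule.span F {(r x) ^ j}) =
        rA ^ p * ((Submodule.span F {(r x) ^ i} * rA) * Submodule.span F {(r x) ^ j}) := by
      rw [mul_assoc, mul_assoc]
    rw [e1]
    refine le_trans (mul_le_mul' le_rfl
      (mul_le_mul' (hswap i) le_rfl)) ?_
    simp only [Submodule.iSup_mul, Submodule.mul_iSup]
    refine iSup₂_le fun m hm => ?_
    have e2 : rA ^ p * (rA * Submodule.span F {(r x) ^ m} * Submodule.span F {(r x) ^ j}) =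
        rA ^ (p + 1) * Submodule.span F {(r x) ^ (m + j)} := by
      rw [mul_assoc rA, Submodule.span_mul_span, Set.singleton_mul_singleton, ← pow_add,
        Submodule.pow_succ, mul_assoc]
    rw [e2]
    refine le_iSup₂ (f := fun n (_ : n ∈ Finset.range ((p + 1) * k + 1)) =>
      rA ^ (p + 1) * Submodule.span F {(r x) ^ n}) (m + j) ?_
    simp only [Finset.mem_range] at hj hi hm ⊢
    have : (p + 1) * k = p * k + k := by ring
    omega
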